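/- arXiv:2007.10961 — 2 statements merged into one kernel-verified Lean document; each statement's English description precedes it below -/
import Mathlib

section
/- Let X be a real m×n matrix with singular value decomposition X = UΣVᵀ where all singular values are strictly positive (X has full rank min(m,n)). Then the nuclear norm is differentiable at X and its gradient is U Vᵀ, i.e., for any direction H, the derivative of t ↦ ‖X + tH‖_* at t = 0 equals ⟨U Vᵀ, H⟩. -/
open Matrix

open scoped MatrixOrder in
lemma psd_trace_eq {k : ℕ} (B P : Matrix (Fin k) (Fin k) ℝ) (hB : B.IsHermitian)
    (hP : P.PosSemidef) (hPB : P * P = B) : P.trace = ∑ i, Real.sqrt (hB.eigenvalues i) := by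
  have hBpsd : B.PosSemidef := by
    rw [← hPB]; nth_rewrite 1 [← hP.1.eq]; exact posSemidef_conjTranspose_mul_self P
  have h1 : P = CFC.sqrt B := (CFC.sqrt_unique hPB hP.nonneg).symm
  rw [h1, CFC.sqrt_eq_real_sqrt B hBpsd.nonneg, cfcₙ_eq_cfc (hf0 := Real.sqrt_zero), hB.cfc_eq, IsHermitian.cfc,
    Unitary.conjStarAlgAut_apply, Matrix.trace_mul_cycle, Unitary.coe_star_mul_self, Matrix.one_mul,
    Matrix.trace_diagonal]
  simp
attribute [local instance] Matrix.linftyOpNormedAddCommGroup Matrix.linftyOpNormedSpace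
  Matrix.linftyOpNormedRing Matrix.linftyOpNormedAlgebra

lemma entry_abs_le_norm {k l : ℕ} (A : Matrix (Fin k) (Fin l) ℝ) (i : Fin k) (j : Fin l) :
    |A i j| ≤ ‖A‖ := by
  rw [Matrix.linfty_opNorm_def]
  have h1 : ‖A i j‖₊ ≤ ∑ j', ‖A i j'‖₊ :=
    Finset.single_le_sum (f := fun j' => ‖A i j'‖₊) (fun _ _ => zero_le) (Finset.mem_univ j)
  have h2 : (∑ j', ‖A i j'‖₊) ≤ Finset.univ.sup fun i' => ∑ j', ‖A i' j'‖₊ :=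
    Finset.le_sup (f := fun i' => ∑ j', ‖A i' j'‖₊) (Finset.mem_univ i)
  have := NNReal.coe_le_coe.mpr (h1.trans h2)
  simpa [Real.norm_eq_abs] using this

lemma posdef_of_near {k : ℕ} (W : Matrix (Fin k) (Fin k) ℝ) (hW : Wᵀ * W = 1)
    (hW2 : W * Wᵀ = 1) (d : Fin k → ℝ) (c : ℝ) (hc : 0 < c) (hcd : ∀ i, c ≤ d i)
    (Q : Matrix (Fin k) (Fin k) ℝ) (hQsym : Qᵀ = Q)
    (hnear : ‖Q - W * diagonal d * Wᵀ‖ < c / ((k : ℝ) ^ 2 + 1)) : Q.PosDef := by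
  set S₀ := W * diagonal d * Wᵀ with hS₀
  set Δ := Q - S₀ with hΔ
  rw [Matrix.posDef_iff_dotProduct_mulVec]
  constructor
  · rw [Matrix.IsHermitian, conjTranspose_eq_transpose_of_trivial, hQsym]
  intro x hx
  have hstar : star x = x := by simp
  have hxx : 0 < dotProduct x x := by
    obtain ⟨i, hi⟩ := Function.ne_iff.mp hx
    refine Finset.sum_pos' (fun j _ => mul_self_nonneg _) ⟨i, Finset.mem_univ i, ?_⟩
    exact mul_self_pos.mpr hi
  -- each |x i * x j| ≤ x ⬝ᵥ x
  have hxij : ∀ i j, |x i| * |x j| ≤ dotProduct x x := by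
    intro i j
    have h1 : x i * x i ≤ dotProduct x x :=
      Finset.single_le_sum (f := fun j => x j * x j) (fun j _ => mul_self_nonneg _)
        (Finset.mem_univ i)
    have h2 : x j * x j ≤ dotProduct x x :=
      Finset.single_le_sum (f := fun j => x j * x j) (fun j _ => mul_self_nonneg _)
        (Finset.mem_univ j)
    nlinarith [abs_nonneg (x i), abs_nonneg (x j), sq_abs (x i), sq_abs (x j)]
  -- lower bound for S₀ part
  have hS₀low : c * dotProduct x x ≤ dotProduct x (S₀ *ᵥ x) := by
    set y := Wᵀ *ᵥ x with hy
    have h1 : dotProduct x (S₀ *ᵥ x) = dotProduct y (diagonal d *ᵥ y) := by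
      rw [hS₀, ← Matrix.mulVec_mulVec, ← Matrix.mulVec_mulVec,
        Matrix.dotProduct_mulVec x W, ← Matrix.mulVec_transpose]
    have h2 : dotProduct y y = dotProduct x x := by
      rw [hy, Matrix.dotProduct_mulVec, Matrix.vecMul_transpose,
        Matrix.mulVec_mulVec, hW2, Matrix.one_mulVec]
    rw [h1]
    have : dotProduct y (diagonal d *ᵥ y) = ∑ i, d i * (y i * y i) := by
      simp only [dotProduct, Matrix.mulVec_diagonal]
      exact Finset.sum_congr rfl fun i _ => by ring
    rw [this, ← h2]
    have : c * dotProduct y y = ∑ i, c * (y i * y i) := by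
      simp [dotProduct, Finset.mul_sum]
    rw [this]
    exact Finset.sum_le_sum fun i _ => by
      have := mul_self_nonneg (y i)
      exact mul_le_mul_of_nonneg_right (hcd i) this
  -- upper bound for Δ part
  have hΔbound : |dotProduct x (Δ *ᵥ x)| ≤ (k : ℝ) ^ 2 * ‖Δ‖ * dotProduct x x := by
    have h1 : |dotProduct x (Δ *ᵥ x)| ≤ ∑ i, ∑ j, |Δ i j| * (|x i| * |x j|) := by
      calc |dotProduct x (Δ *ᵥ x)| = |∑ i, ∑ j, x i * (Δ i j * x j)| := by
            simp [dotProduct, Matrix.mulVec, Finset.mul_sum]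
        _ ≤ ∑ i, |∑ j, x i * (Δ i j * x j)| := Finset.abs_sum_le_sum_abs _ _
        _ ≤ ∑ i, ∑ j, |x i * (Δ i j * x j)| :=
            Finset.sum_le_sum fun i _ => Finset.abs_sum_le_sum_abs _ _
        _ = ∑ i, ∑ j, |Δ i j| * (|x i| * |x j|) := by
            refine Finset.sum_congr rfl fun i _ => Finset.sum_congr rfl fun j _ => ?_
            rw [abs_mul, abs_mul]; ring
    have h2 : ∀ i j, |Δ i j| * (|x i| * |x j|) ≤ ‖Δ‖ * dotProduct x x := by
      intro i j
      have := mul_le_mul (entry_abs_le_norm Δ i j) (hxij i j)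
        (by positivity) (norm_nonneg Δ)
      exact this
    refine h1.trans ?_
    calc (∑ i, ∑ j, |Δ i j| * (|x i| * |x j|)) ≤ ∑ _i : Fin k, ∑ _j : Fin k, ‖Δ‖ * dotProduct x x :=
          Finset.sum_le_sum fun i _ => Finset.sum_le_sum fun j _ => h2 i j
      _ = (k:ℝ)^2 * ‖Δ‖ * dotProduct x x := by
          rw [Finset.sum_const, Finset.sum_const, Finset.card_univ, Fintype.card_fin,
            nsmul_eq_mul, nsmul_eq_mul]; ring
  have hQx : dotProduct x (Q *ᵥ x) = dotProduct x (S₀ *ᵥ x) + dotProduct x (Δ *ᵥ x) := by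
    rw [hΔ]; rw [Matrix.sub_mulVec, dotProduct_sub]; ring
  rw [hstar, hQx]
  have hkb : (k:ℝ)^2 * ‖Δ‖ < c := by
    have hk1 : (0:ℝ) < (k:ℝ)^2 + 1 := by positivity
    have h2 : (k:ℝ)^2 * ‖Δ‖ ≤ ((k:ℝ)^2 + 1) * ‖Δ‖ := by nlinarith [norm_nonneg Δ]
    have h3 : ((k:ℝ)^2 + 1) * ‖Δ‖ < c := by
      rw [← lt_div_iff₀' hk1]; exact hnear
    linarith
  nlinarith [abs_le.mp hΔbound, hxx, mul_lt_mul_of_pos_right hkb hxx]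

/-- Frobenius inner product. -/
noncomputable def frobInner {m n : ℕ} (A B : Matrix (Fin m) (Fin n) ℝ) : ℝ :=
  ∑ i, ∑ j, A i j * B i j

/-- Nuclear norm: sum of the singular values of `A`
(square roots of the eigenvalues of `Aᵀ A`). -/
noncomputable def nuclearNorm {m n : ℕ} (A : Matrix (Fin m) (Fin n) ℝ) : ℝ :=
  ∑ i, Real.sqrt ((Matrix.isHermitian_conjTranspose_mul_self A).eigenvalues i)

lemma nuclear_eq_trace {m n : ℕ} (A : Matrix (Fin m) (Fin n) ℝ)
    (P : Matrix (Fin n) (Fin n) ℝ) (hP : P.PosSemidef) (hPA : P * P = Aᵀ * A) :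
    nuclearNorm A = P.trace := by
  have hPSD : (Aᵀ * A).PosSemidef := by
    rw [← conjTranspose_eq_transpose_of_trivial]
    exact Matrix.posSemidef_conjTranspose_mul_self A
  exact (psd_trace_eq _ P (Matrix.isHermitian_conjTranspose_mul_self A) hP
    (by rw [conjTranspose_eq_transpose_of_trivial]; exact hPA)).symm


def symSub (k : ℕ) : Submodule ℝ (Matrix (Fin k) (Fin k) ℝ) where
  carrier := {A | Aᵀ = A}
  add_mem' := by intro a b ha hb; simp_all [Matrix.transpose_add]
  zero_mem' := by simp
  smul_mem' := by intro c a ha; simp_all [Matrix.transpose_smul]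

lemma hasStrictFDerivAt_subtype {E F : Type*} [NormedAddCommGroup E] [NormedSpace ℝ E]
    [NormedAddCommGroup F] [NormedSpace ℝ F] (p : Submodule ℝ F)
    (f : E → ↥p) (L : E →L[ℝ] ↥p) (a : E)
    (h : HasStrictFDerivAt (fun x => ((f x : F))) (p.subtypeL.comp L) a) :
    HasStrictFDerivAt f L a := by
  rw [hasStrictFDerivAt_iff_isLittleO] at h ⊢
  rw [← Asymptotics.isLittleO_norm_left] at h ⊢
  convert h using 2
  rfl

lemma hasDerivAt_subtype {F : Type*} [NormedAddCommGroup F] [NormedSpace ℝ F]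
    (p : Submodule ℝ F) (f : ℝ → ↥p) (v : ↥p) (a : ℝ)
    (h : HasDerivAt (fun x => ((f x : F))) (v : F) a) :
    HasDerivAt f v a := by
  rw [hasDerivAt_iff_isLittleO] at h ⊢
  rw [← Asymptotics.isLittleO_norm_left] at h ⊢
  convert h using 2
  rfl

set_option maxHeartbeats 2000000 in
lemma core {k : ℕ} (W : Matrix (Fin k) (Fin k) ℝ) (hW : Wᵀ * W = 1) (hW2 : W * Wᵀ = 1)
    (d : Fin k → ℝ) (hd : ∀ i, 0 < d i)
    (G : ℝ → Matrix (Fin k) (Fin k) ℝ) (hGsym : ∀ t, (G t)ᵀ = G t)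
    (hG0 : G 0 = (W * diagonal d * Wᵀ) * (W * diagonal d * Wᵀ))
    (N : Matrix (Fin k) (Fin k) ℝ) (hNsym : Nᵀ = N) (hG' : HasDerivAt G N 0) :
    ∃ Q : ℝ → Matrix (Fin k) (Fin k) ℝ,
      (∀ᶠ t in nhds (0:ℝ), (Q t).PosDef ∧ (Q t)ᵀ = Q t ∧ Q t * Q t = G t) ∧
      HasDerivAt (fun t => (Q t).trace) (∑ i, (Wᵀ * N * W) i i / (2 * d i)) 0 := by
  classical
  set S₀ := W * diagonal d * Wᵀ with hS₀def
  have hWW : ∀ A : Matrix (Fin k) (Fin k) ℝ, Wᵀ * (W * A) = A := fun A => by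
    rw [← Matrix.mul_assoc, hW, Matrix.one_mul]
  have hWW2 : ∀ A : Matrix (Fin k) (Fin k) ℝ, W * (Wᵀ * A) = A := fun A => by
    rw [← Matrix.mul_assoc, hW2, Matrix.one_mul]
  set conj : Matrix (Fin k) (Fin k) ℝ → Matrix (Fin k) (Fin k) ℝ :=
    fun A => W * A * Wᵀ with hconjdef
  set conjT : Matrix (Fin k) (Fin k) ℝ → Matrix (Fin k) (Fin k) ℝ :=
    fun A => Wᵀ * A * W with hconjTdef
  have hconj_conjT : ∀ A, conj (conjT A) = A := fun A => by
    simp only [hconjdef, hconjTdef, Matrix.mul_assoc, hW2, Matrix.mul_one, hWW2]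
  have hconjT_conj : ∀ A, conjT (conj A) = A := fun A => by
    simp only [hconjdef, hconjTdef, Matrix.mul_assoc, hW, Matrix.mul_one, hWW]
  have hconj_mul : ∀ A B, conj A * conj B = conj (A * B) := fun A B => by
    simp only [hconjdef, Matrix.mul_assoc, hWW]
  have hconjT_mul_left : ∀ A B, conjT (conj A * B) = A * conjT B := fun A B => by
    simp only [hconjdef, hconjTdef, Matrix.mul_assoc, hWW]
  have hconjT_mul_right : ∀ A B, conjT (B * conj A) = conjT B * A := fun A B => by
    simp only [hconjdef, hconjTdef, Matrix.mul_assoc, hWW, hWW2, hW, Matrix.mul_one]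
  have hconj_add : ∀ A B, conj (A + B) = conj A + conj B := fun A B => by
    simp only [hconjdef, Matrix.add_mul, Matrix.mul_add]
  have hconj_symm : ∀ A : Matrix (Fin k) (Fin k) ℝ, Aᵀ = A → (conj A)ᵀ = conj A := fun A hA => by
    simp only [hconjdef, Matrix.transpose_mul, Matrix.transpose_transpose, hA, Matrix.mul_assoc]
  have hS₀symm : S₀ᵀ = S₀ := by
    rw [hS₀def]
    simp only [Matrix.transpose_mul, Matrix.transpose_transpose, Matrix.diagonal_transpose,
      Matrix.mul_assoc]
  have hdd : ∀ i j : Fin k, d i + d j ≠ 0 := fun i j => (add_pos (hd i) (hd j)).ne'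
  set Kmap : Matrix (Fin k) (Fin k) ℝ → Matrix (Fin k) (Fin k) ℝ :=
    fun A => Matrix.of fun i j => (conjT A) i j / (d i + d j) with hKdef
  set Linv0 : Matrix (Fin k) (Fin k) ℝ → Matrix (Fin k) (Fin k) ℝ :=
    fun A => conj (Kmap A) with hLinv0def
  have key1 : ∀ A, diagonal d * Kmap A + Kmap A * diagonal d = conjT A := fun A => by
    ext i j
    simp only [Matrix.add_apply, Matrix.diagonal_mul, Matrix.mul_diagonal, hKdef, Matrix.of_apply]
    field_simp [hdd i j]
  have hLinv_right : ∀ A, S₀ * Linv0 A + Linv0 A * S₀ = A := fun A => by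
    have h1 : S₀ = conj (diagonal d) := rfl
    rw [hLinv0def, h1, hconj_mul, hconj_mul, ← hconj_add, key1, hconj_conjT]
  have hLinv_left : ∀ S, Linv0 (S₀ * S + S * S₀) = S := fun S => by
    have h2 : conjT (S₀ * S + S * S₀) = diagonal d * conjT S + conjT S * diagonal d := by
      calc conjT (S₀ * S + S * S₀) = conjT (S₀ * S) + conjT (S * S₀) := by
            show Wᵀ * (S₀ * S + S * S₀) * W = Wᵀ * (S₀ * S) * W + Wᵀ * (S * S₀) * W
            rw [Matrix.mul_add, Matrix.add_mul]
        _ = diagonal d * conjT S + conjT S * diagonal d := by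
            rw [hconjT_mul_left (diagonal d) S, hconjT_mul_right (diagonal d) S]
    have h3 : Kmap (S₀ * S + S * S₀) = conjT S := by
      ext i j
      simp only [hKdef, Matrix.of_apply, h2, Matrix.add_apply, Matrix.diagonal_mul,
        Matrix.mul_diagonal]
      field_simp [hdd i j]
    show conj (Kmap (S₀ * S + S * S₀)) = S
    rw [h3, hconj_conjT]
  have hKmap_symm : ∀ A : Matrix (Fin k) (Fin k) ℝ, Aᵀ = A → (Kmap A)ᵀ = Kmap A := by
    intro A hA
    have hcTs : (conjT A)ᵀ = conjT A := by
      simp only [hconjTdef, Matrix.transpose_mul, Matrix.transpose_transpose, hA, Matrix.mul_assoc]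
    ext i j
    have h4 : (conjT A) j i = (conjT A) i j := by
      rw [← Matrix.transpose_apply (conjT A) i j, hcTs]
    simp only [hKdef, Matrix.transpose_apply, Matrix.of_apply]
    rw [h4, add_comm (d j) (d i)]
  -- the symmetric submodule
  set Sym := symSub k with hSymdef
  have memSym : ∀ A : Matrix (Fin k) (Fin k) ℝ, Aᵀ = A → A ∈ Sym := fun A hA => hA
  -- the Sylvester linear equivalence on Sym
  set Leq : ↥Sym ≃ₗ[ℝ] ↥Sym := {
    toFun := fun S => ⟨S₀ * (S : Matrix (Fin k) (Fin k) ℝ) + (S : Matrix (Fin k) (Fin k) ℝ) * S₀,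
      by
        have hS := S.2
        show (S₀ * (S : Matrix (Fin k) (Fin k) ℝ) + (S : Matrix (Fin k) (Fin k) ℝ) * S₀)ᵀ
          = S₀ * (S : Matrix (Fin k) (Fin k) ℝ) + (S : Matrix (Fin k) (Fin k) ℝ) * S₀
        simp only [Matrix.transpose_add, Matrix.transpose_mul, hS₀symm]
        rw [show ((S : Matrix (Fin k) (Fin k) ℝ))ᵀ = (S : Matrix (Fin k) (Fin k) ℝ) from hS]
        exact add_comm _ _⟩
    map_add' := fun S T => by
      ext i j
      simp [Matrix.mul_add, Matrix.add_mul]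
      ring
    map_smul' := fun c S => by
      ext i j
      simp [Matrix.mul_smul, Matrix.smul_mul]
    invFun := fun A => ⟨Linv0 A, by
      have hA := A.2
      exact hconj_symm _ (hKmap_symm _ (hA : (A : Matrix (Fin k) (Fin k) ℝ)ᵀ = A))⟩
    left_inv := fun S => Subtype.ext (hLinv_left S)
    right_inv := fun A => Subtype.ext (hLinv_right A) } with hLeqdef
  set Lc : ↥Sym ≃L[ℝ] ↥Sym := Leq.toContinuousLinearEquiv with hLcdef
  -- the squaring map on Sym
  set sqfun : ↥Sym → ↥Sym := fun S =>
    ⟨(S : Matrix (Fin k) (Fin k) ℝ) * (S : Matrix (Fin k) (Fin k) ℝ), by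
      have hS := S.2
      show ((S : Matrix (Fin k) (Fin k) ℝ) * (S : Matrix (Fin k) (Fin k) ℝ))ᵀ
        = (S : Matrix (Fin k) (Fin k) ℝ) * (S : Matrix (Fin k) (Fin k) ℝ)
      simp only [Matrix.transpose_mul]
      rw [show ((S : Matrix (Fin k) (Fin k) ℝ))ᵀ = (S : Matrix (Fin k) (Fin k) ℝ) from hS]⟩
    with hsqdef
  set S₀' : ↥Sym := ⟨S₀, hS₀symm⟩ with hS₀'def
  have hsq : HasStrictFDerivAt sqfun (Lc : ↥Sym →L[ℝ] ↥Sym) S₀' := by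
    apply hasStrictFDerivAt_subtype
    have ha : HasStrictFDerivAt (fun S : ↥Sym => (S : Matrix (Fin k) (Fin k) ℝ))
        Sym.subtypeL S₀' := Sym.subtypeL.hasStrictFDerivAt
    have hmul := ha.mul' ha
    convert hmul using 2
    · rfl
    · rfl
    · ext S : 1
      rfl
  -- the path in Sym
  set Msym : ℝ → ↥Sym := fun t => ⟨G t, hGsym t⟩ with hMsymdef
  have hM0 : Msym 0 = sqfun S₀' := Subtype.ext hG0
  set N' : ↥Sym := ⟨N, hNsym⟩ with hN'def
  have hMder : HasDerivAt Msym N' 0 := hasDerivAt_subtype _ _ _ _ hG'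
  -- the local square root
  set r : ↥Sym → ↥Sym := hsq.localInverse sqfun Lc S₀' with hrdef
  have hrstrict : HasStrictFDerivAt r (Lc.symm : ↥Sym →L[ℝ] ↥Sym) (sqfun S₀') :=
    hsq.to_localInverse
  have hcomp : HasDerivAt (fun t => r (Msym t)) (Lc.symm N') 0 := by
    have h1 : HasFDerivAt r (Lc.symm : ↥Sym →L[ℝ] ↥Sym) (Msym 0) := by
      rw [hM0]; exact hrstrict.hasFDerivAt
    exact h1.comp_hasDerivAt 0 hMder
  set Q : ℝ → Matrix (Fin k) (Fin k) ℝ := fun t => (r (Msym t) : Matrix (Fin k) (Fin k) ℝ)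
    with hQdef
  refine ⟨Q, ?_, ?_⟩
  · -- eventual properties
    have hMcont : Filter.Tendsto Msym (nhds 0) (nhds (sqfun S₀')) := by
      rw [← hM0]; exact hMder.continuousAt
    have hev1 : ∀ᶠ t in nhds (0:ℝ), sqfun (r (Msym t)) = Msym t :=
      hMcont.eventually hsq.eventually_right_inverse
    have hQcont : Filter.Tendsto Q (nhds 0) (nhds S₀) := by
      have h1 : Filter.Tendsto (fun t => r (Msym t)) (nhds 0) (nhds S₀') := by
        have := hcomp.continuousAt
        rw [ContinuousAt] at this
        rw [hM0, hrdef, hsq.localInverse_apply_image] at this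
        exact this
      exact (continuous_subtype_val.tendsto S₀').comp h1
    obtain ⟨c, hc, hcd⟩ : ∃ c : ℝ, 0 < c ∧ ∀ i, c ≤ d i := by
      rcases isEmpty_or_nonempty (Fin k) with h | h
      · exact ⟨1, one_pos, fun i => (IsEmpty.false i).elim⟩
      · refine ⟨Finset.univ.inf' Finset.univ_nonempty d, ?_, fun i => Finset.inf'_le d (Finset.mem_univ i)⟩
        rw [Finset.lt_inf'_iff]
        exact fun i _ => hd i
    have hnorm : Filter.Tendsto (fun t => ‖Q t - S₀‖) (nhds 0) (nhds 0) := by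
      have := (hQcont.sub (tendsto_const_nhds (x := S₀))).norm
      simpa using this
    have hev2 : ∀ᶠ t in nhds (0:ℝ), ‖Q t - S₀‖ < c / ((k:ℝ)^2 + 1) :=
      hnorm.eventually_lt_const (by positivity)
    filter_upwards [hev1, hev2] with t h1 h2
    have hQsym : (Q t)ᵀ = Q t := (r (Msym t)).2
    refine ⟨posdef_of_near W hW hW2 d c hc hcd (Q t) hQsym h2, hQsym, ?_⟩
    have := congrArg (fun S : ↥Sym => (S : Matrix (Fin k) (Fin k) ℝ)) h1
    exact this
  · -- the derivative of the trace
    have htraceC : Continuous (Matrix.traceLinearMap (Fin k) ℝ ℝ :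
        Matrix (Fin k) (Fin k) ℝ →ₗ[ℝ] ℝ) := LinearMap.continuous_of_finiteDimensional _
    set trCLM : Matrix (Fin k) (Fin k) ℝ →L[ℝ] ℝ :=
      ⟨Matrix.traceLinearMap (Fin k) ℝ ℝ, htraceC⟩ with htrdef
    have htr : HasDerivAt (fun t => (Q t).trace)
        (trCLM ((Lc.symm N' : ↥Sym) : Matrix (Fin k) (Fin k) ℝ)) 0 := by
      have h2 := (trCLM.comp Sym.subtypeL).hasFDerivAt.comp_hasDerivAt 0 hcomp
      exact h2
    convert htr using 1
    -- compute the value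
    have hy : Lc.symm N' = ⟨Linv0 N, hconj_symm _ (hKmap_symm _ hNsym)⟩ := by
      have : Lc ⟨Linv0 N, hconj_symm _ (hKmap_symm _ hNsym)⟩ = N' :=
        Subtype.ext (hLinv_right N)
      rw [← this, ContinuousLinearEquiv.symm_apply_apply]
    rw [hy]
    show ∑ i, (Wᵀ * N * W) i i / (2 * d i) = (Linv0 N).trace
    have htr1 : (Linv0 N).trace = (Kmap N).trace := by
      show (W * Kmap N * Wᵀ).trace = _
      rw [Matrix.trace_mul_cycle, hW, Matrix.one_mul]
    rw [htr1, Matrix.trace]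
    refine Finset.sum_congr rfl fun i _ => ?_
    show (Wᵀ * N * W) i i / (2 * d i) = (conjT N) i i / (d i + d i)
    rw [two_mul]

lemma frobInner_eq_trace {m n : ℕ} (A B : Matrix (Fin m) (Fin n) ℝ) :
    frobInner A B = (Aᵀ * B).trace := by
  rw [frobInner, Matrix.trace, Finset.sum_comm]
  refine Finset.sum_congr rfl fun j _ => ?_
  simp [Matrix.mul_apply, Matrix.diag]

lemma main1 {m n : ℕ} (X U : Matrix (Fin m) (Fin n) ℝ) (W : Matrix (Fin n) (Fin n) ℝ)
    (σ : Fin n → ℝ) (hU : Uᵀ * U = 1) (hW : Wᵀ * W = 1) (hσ : ∀ i, 0 < σ i)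
    (hX : X = U * diagonal σ * Wᵀ) (H : Matrix (Fin m) (Fin n) ℝ) :
    HasDerivAt (fun t : ℝ => nuclearNorm (X + t • H)) (frobInner (U * Wᵀ) H) 0 := by
  have hW2 : W * Wᵀ = 1 := mul_eq_one_comm.mp hW
  have hWW : ∀ A : Matrix (Fin n) (Fin n) ℝ, Wᵀ * (W * A) = A := fun A => by
    rw [← Matrix.mul_assoc, hW, Matrix.one_mul]
  have hUU : ∀ A : Matrix (Fin n) (Fin n) ℝ, Uᵀ * (U * A) = A := fun A => by
    rw [← Matrix.mul_assoc, hU, Matrix.one_mul]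
  set G : ℝ → Matrix (Fin n) (Fin n) ℝ := fun t => (X + t • H)ᵀ * (X + t • H) with hGdef
  have hGsym : ∀ t, (G t)ᵀ = G t := fun t => by
    rw [hGdef]
    simp [Matrix.transpose_mul]
  have hXT : Xᵀ = W * diagonal σ * Uᵀ := by
    rw [hX]
    simp [Matrix.transpose_mul, Matrix.diagonal_transpose, Matrix.mul_assoc]
  have hG0 : G 0 = (W * diagonal σ * Wᵀ) * (W * diagonal σ * Wᵀ) := by
    show (X + (0:ℝ) • H)ᵀ * (X + (0:ℝ) • H) = _
    rw [zero_smul, add_zero, hXT]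
    nth_rewrite 1 [hX]
    simp only [Matrix.mul_assoc, hUU, hWW]
  set N : Matrix (Fin n) (Fin n) ℝ := Xᵀ * H + Hᵀ * X with hNdef
  have hNsym : Nᵀ = N := by
    rw [hNdef]
    simp only [Matrix.transpose_add, Matrix.transpose_mul, Matrix.transpose_transpose]
    exact add_comm _ _
  have hGt : ∀ t : ℝ, G t = Xᵀ * X + t • N + (t * t) • (Hᵀ * H) := fun t => by
    rw [hGdef, hNdef]
    simp only [Matrix.transpose_add, Matrix.transpose_smul, Matrix.add_mul,
      Matrix.mul_add, Matrix.smul_mul, Matrix.mul_smul, smul_smul, smul_add]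
    abel
  have hG' : HasDerivAt G N 0 := by
    have hA : HasDerivAt (fun t : ℝ => t • N) ((1:ℝ) • N) 0 :=
      (hasDerivAt_id (0:ℝ)).smul_const N
    have hB : HasDerivAt (fun t : ℝ => (t * t) • (Hᵀ * H))
        ((0 : Matrix _ _ ℝ)) 0 := by
      have := ((hasDerivAt_id (0:ℝ)).mul (hasDerivAt_id (0:ℝ))).smul_const (Hᵀ * H)
      simp at this; exact this
    have htot := ((hasDerivAt_const (0:ℝ) (Xᵀ * X)).add hA).add hB
    rw [show G = fun t : ℝ => Xᵀ * X + t • N + (t * t) • (Hᵀ * H) from funext hGt]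
    simp at htot; exact htot
  obtain ⟨Q, hev, hder⟩ := core W hW hW2 σ hσ G hGsym hG0 N hNsym hG'
  have heq : (fun t : ℝ => (Q t).trace) =ᶠ[nhds (0:ℝ)]
      fun t : ℝ => nuclearNorm (X + t • H) := by
    filter_upwards [hev] with t ht
    obtain ⟨hPD, hsym, hQQ⟩ := ht
    exact (nuclear_eq_trace (X + t • H) (Q t) hPD.posSemidef (by rw [hQQ])).symm
  have hder2 : HasDerivAt (fun t : ℝ => nuclearNorm (X + t • H))
      (∑ i, (Wᵀ * N * W) i i / (2 * σ i)) 0 := by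
    exact (Filter.EventuallyEq.hasDerivAt_iff heq).mp hder
  convert hder2 using 1
  -- value computation
  have h1 : Wᵀ * N * W = diagonal σ * (Uᵀ * H * W) + (Wᵀ * Hᵀ * U) * diagonal σ := by
    rw [hNdef, Matrix.mul_add, Matrix.add_mul, hXT]
    congr 1
    · simp only [Matrix.mul_assoc, hWW]
    · nth_rewrite 1 [hX]
      simp only [Matrix.mul_assoc, hW, Matrix.mul_one]
  have h2 : ∀ i, (Wᵀ * Hᵀ * U) i i = (Uᵀ * H * W) i i := fun i => by
    have h3 : Wᵀ * Hᵀ * U = (Uᵀ * H * W)ᵀ := by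
      simp [Matrix.transpose_mul, Matrix.mul_assoc]
    rw [h3, Matrix.transpose_apply]
  have hval : ∀ i, (Wᵀ * N * W) i i / (2 * σ i) = (Uᵀ * H * W) i i := fun i => by
    rw [h1, Matrix.add_apply, Matrix.diagonal_mul, Matrix.mul_diagonal, h2,
      div_eq_iff (by have := hσ i; positivity : (2:ℝ) * σ i ≠ 0)]
    ring
  rw [Finset.sum_congr rfl fun i _ => hval i]
  rw [frobInner_eq_trace, Matrix.transpose_mul, Matrix.transpose_transpose,
    ← Matrix.trace_mul_cycle]
  rfl

lemma main2 {m n : ℕ} (X : Matrix (Fin m) (Fin n) ℝ) (U : Matrix (Fin m) (Fin m) ℝ)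
    (V : Matrix (Fin n) (Fin m) ℝ)
    (σ : Fin m → ℝ) (hU : Uᵀ * U = 1) (hV : Vᵀ * V = 1) (hσ : ∀ i, 0 < σ i)
    (hX : X = U * diagonal σ * Vᵀ) (H : Matrix (Fin m) (Fin n) ℝ) :
    HasDerivAt (fun t : ℝ => nuclearNorm (X + t • H)) (frobInner (U * Vᵀ) H) 0 := by
  have hU2 : U * Uᵀ = 1 := mul_eq_one_comm.mp hU
  have hUU : ∀ A, Uᵀ * (U * A) = A := fun A : Matrix (Fin m) (Fin m) ℝ => by
    rw [← Matrix.mul_assoc, hU, Matrix.one_mul]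
  have hVV : ∀ A : Matrix (Fin m) (Fin m) ℝ, Vᵀ * (V * A) = A := fun A => by
    rw [← Matrix.mul_assoc, hV, Matrix.one_mul]
  set G : ℝ → Matrix (Fin m) (Fin m) ℝ := fun t => (X + t • H) * (X + t • H)ᵀ with hGdef
  have hGsym : ∀ t, (G t)ᵀ = G t := fun t => by
    rw [hGdef]
    simp [Matrix.transpose_mul]
  have hXT : Xᵀ = V * diagonal σ * Uᵀ := by
    rw [hX]
    simp [Matrix.transpose_mul, Matrix.diagonal_transpose, Matrix.mul_assoc]
  have hG0 : G 0 = (U * diagonal σ * Uᵀ) * (U * diagonal σ * Uᵀ) := by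
    show (X + (0:ℝ) • H) * (X + (0:ℝ) • H)ᵀ = _
    rw [zero_smul, add_zero, hXT]
    nth_rewrite 1 [hX]
    simp only [Matrix.mul_assoc, hUU, hVV]
  set N : Matrix (Fin m) (Fin m) ℝ := X * Hᵀ + H * Xᵀ with hNdef
  have hNsym : Nᵀ = N := by
    rw [hNdef]
    simp only [Matrix.transpose_add, Matrix.transpose_mul, Matrix.transpose_transpose]
    exact add_comm _ _
  have hGt : ∀ t : ℝ, G t = X * Xᵀ + t • N + (t * t) • (H * Hᵀ) := fun t => by
    rw [hGdef, hNdef]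
    simp only [Matrix.transpose_add, Matrix.transpose_smul, Matrix.add_mul,
      Matrix.mul_add, Matrix.smul_mul, Matrix.mul_smul, smul_smul, smul_add]
    abel
  have hG' : HasDerivAt G N 0 := by
    have hA : HasDerivAt (fun t : ℝ => t • N) ((1:ℝ) • N) 0 :=
      (hasDerivAt_id (0:ℝ)).smul_const N
    have hB : HasDerivAt (fun t : ℝ => (t * t) • (H * Hᵀ))
        ((0 : Matrix _ _ ℝ)) 0 := by
      have := ((hasDerivAt_id (0:ℝ)).mul (hasDerivAt_id (0:ℝ))).smul_const (H * Hᵀ)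
      simp at this; exact this
    have htot := ((hasDerivAt_const (0:ℝ) (X * Xᵀ)).add hA).add hB
    rw [show G = fun t : ℝ => X * Xᵀ + t • N + (t * t) • (H * Hᵀ) from funext hGt]
    simp at htot; exact htot
  obtain ⟨Q, hev, hder⟩ := core U hU hU2 σ hσ G hGsym hG0 N hNsym hG'
  have heq : (fun t : ℝ => (Q t).trace) =ᶠ[nhds (0:ℝ)]
      fun t : ℝ => nuclearNorm (X + t • H) := by
    filter_upwards [hev] with t ht
    obtain ⟨hPD, hsym, hQQ⟩ := ht
    set A := X + t • H with hAdef
    set Qi := (Q t)⁻¹ with hQidef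
    have hdet : IsUnit (Q t).det := isUnit_iff_ne_zero.mpr hPD.det_pos.ne'
    have hc1 : ∀ Z : Matrix (Fin m) (Fin n) ℝ, Qi * (Q t * Z) = Z := fun Z => by
      rw [← Matrix.mul_assoc, hQidef, Matrix.nonsing_inv_mul _ hdet, Matrix.one_mul]
    have hc2 : ∀ Z : Matrix (Fin m) (Fin n) ℝ, Q t * (Qi * Z) = Z := fun Z => by
      rw [← Matrix.mul_assoc, hQidef, Matrix.mul_nonsing_inv _ hdet, Matrix.one_mul]
    set P : Matrix (Fin n) (Fin n) ℝ := Aᵀ * Qi * A with hPdef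
    have hAAT : A * Aᵀ = Q t * Q t := hQQ.symm
    have hPsd : P.PosSemidef := by
      have h6 := (hPD.inv.posSemidef).conjTranspose_mul_mul_same (B := A)
      rw [conjTranspose_eq_transpose_of_trivial] at h6
      exact h6
    have hPP : P * P = Aᵀ * A := by
      rw [hPdef]
      show (Aᵀ * Qi * A) * (Aᵀ * Qi * A) = Aᵀ * A
      simp only [Matrix.mul_assoc]
      congr 1
      rw [← Matrix.mul_assoc A Aᵀ (Qi * A), hAAT, Matrix.mul_assoc (Q t) (Q t) (Qi * A),
        hc2, hc1]
    have htrP : P.trace = (Q t).trace := by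
      rw [hPdef, Matrix.trace_mul_cycle, hAAT, Matrix.mul_assoc,
        Matrix.mul_nonsing_inv _ hdet, Matrix.mul_one]
    rw [← htrP]
    exact (nuclear_eq_trace A P hPsd hPP).symm
  have hder2 : HasDerivAt (fun t : ℝ => nuclearNorm (X + t • H))
      (∑ i, (Uᵀ * N * U) i i / (2 * σ i)) 0 := by
    exact (Filter.EventuallyEq.hasDerivAt_iff heq).mp hder
  convert hder2 using 1
  have h1 : Uᵀ * N * U = diagonal σ * (Vᵀ * Hᵀ * U) + (Uᵀ * H * V) * diagonal σ := by
    rw [hNdef, Matrix.mul_add, Matrix.add_mul]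
    congr 1
    · nth_rewrite 1 [hX]
      simp only [Matrix.mul_assoc, hUU]
    · rw [hXT]
      simp only [Matrix.mul_assoc, hU, Matrix.mul_one]
  have h2 : ∀ i, (Vᵀ * Hᵀ * U) i i = (Uᵀ * H * V) i i := fun i => by
    have h3 : Vᵀ * Hᵀ * U = (Uᵀ * H * V)ᵀ := by
      simp [Matrix.transpose_mul, Matrix.mul_assoc]
    rw [h3, Matrix.transpose_apply]
  have hval : ∀ i, (Uᵀ * N * U) i i / (2 * σ i) = (Uᵀ * H * V) i i := fun i => by
    rw [h1, Matrix.add_apply, Matrix.diagonal_mul, Matrix.mul_diagonal, h2,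
      div_eq_iff (by have := hσ i; positivity : (2:ℝ) * σ i ≠ 0)]
    ring
  rw [Finset.sum_congr rfl fun i _ => hval i]
  rw [frobInner_eq_trace, Matrix.transpose_mul, Matrix.transpose_transpose,
    ← Matrix.trace_mul_cycle]
  rfl

lemma svd_entry {m n k : ℕ} (P : Matrix (Fin m) (Fin k) ℝ) (R : Matrix (Fin n) (Fin k) ℝ)
    (d : Fin k → ℝ) (i : Fin m) (j : Fin n) :
    (P * diagonal d * Rᵀ) i j = ∑ a, P i a * d a * R j a := by
  have hmd : ∀ x, (P * diagonal d) i x = P i x * d x := fun x => Matrix.mul_diagonal d P i x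
  rw [Matrix.mul_apply]
  simp only [hmd, Matrix.transpose_apply]

lemma key_red {m n k l : ℕ} (e : Fin l ≃ Fin k) (P : Matrix (Fin m) (Fin k) ℝ)
    (R : Matrix (Fin n) (Fin k) ℝ) (d : Fin k → ℝ) :
    (P.submatrix id ⇑e) * diagonal (d ∘ ⇑e) * ((R.submatrix id ⇑e)ᵀ) = P * diagonal d * Rᵀ := by
  ext i j
  rw [svd_entry, svd_entry]
  exact Fintype.sum_equiv e _ _ fun a => rfl

lemma key_orth {p k l : ℕ} (e : Fin l ≃ Fin k) (Umat : Matrix (Fin p) (Fin k) ℝ)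
    (h : Umatᵀ * Umat = 1) :
    ((Umat.submatrix id ⇑e)ᵀ) * (Umat.submatrix id ⇑e) = 1 := by
  ext j j'
  have h2 := congrFun (congrFun h (e j)) (e j')
  simp only [Matrix.mul_apply, Matrix.transpose_apply, Matrix.submatrix_apply, id] at h2 ⊢
  rw [h2]
  simp [Matrix.one_apply, Equiv.apply_eq_iff_eq]

lemma key_prod {m n k l : ℕ} (e : Fin l ≃ Fin k) (P : Matrix (Fin m) (Fin k) ℝ)
    (R : Matrix (Fin n) (Fin k) ℝ) :
    (P.submatrix id ⇑e) * ((R.submatrix id ⇑e)ᵀ) = P * Rᵀ := by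
  have h := key_red e P R (fun _ => 1)
  simpa [Matrix.diagonal_one] using h

/-- At a full-rank matrix `X` with compact SVD `X = U Σ Vᵀ`, all singular values
positive, the nuclear norm is differentiable with gradient `U Vᵀ`. -/
theorem nuclearNorm_gradient_at_full_rank (m n : ℕ)
    (X : Matrix (Fin m) (Fin n) ℝ)
    (U : Matrix (Fin m) (Fin (min m n)) ℝ)
    (V : Matrix (Fin n) (Fin (min m n)) ℝ)
    (σ : Fin (min m n) → ℝ)
    (hU : Uᵀ * U = 1) (hV : Vᵀ * V = 1)
    (hσ : ∀ i, 0 < σ i)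
    (hX : X = U * Matrix.diagonal σ * Vᵀ) :
    ∀ H : Matrix (Fin m) (Fin n) ℝ,
      HasDerivAt (fun t : ℝ => nuclearNorm (X + t • H)) (frobInner (U * Vᵀ) H) 0 := by
  intro H
  rcases le_total n m with hnm | hmn
  · -- n ≤ m : use main1 with square W of size n
    have hmin : min m n = n := min_eq_right hnm
    set e : Fin n ≃ Fin (min m n) := finCongr hmin.symm with hedef
    have hX' : X = (U.submatrix id ⇑e) * diagonal (σ ∘ ⇑e) * ((V.submatrix id ⇑e)ᵀ) := by
      rw [key_red e U V σ]; exact hX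
    have hres := main1 X (U.submatrix id ⇑e) (V.submatrix id ⇑e) (σ ∘ ⇑e)
      (key_orth e U hU) (key_orth e V hV) (fun i => hσ (e i)) hX' H
    rwa [key_prod e U V] at hres
  · -- m ≤ n : use main2 with square U of size m
    have hmin : min m n = m := min_eq_left hmn
    set e : Fin m ≃ Fin (min m n) := finCongr hmin.symm with hedef
    have hX' : X = (U.submatrix id ⇑e) * diagonal (σ ∘ ⇑e) * ((V.submatrix id ⇑e)ᵀ) := by
      rw [key_red e U V σ]; exact hX
    have hres := main2 X (U.submatrix id ⇑e) (V.submatrix id ⇑e) (σ ∘ ⇑e)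
      (key_orth e U hU) (key_orth e V hV) (fun i => hσ (e i)) hX' H
    rwa [key_prod e U V] at hres
end

section
/- Let R₁,…,R_{n_f} and shapes X₁,…,X_{n_f} ∈ ℝ^{3×n_p} (centered) be such that the rotations minimize the total Procrustes cost Σᵢ ‖Rᵢ Xᵢ − (1/n_f)Σⱼ Rⱼ Xⱼ‖_F². Then at a stationary point with Rᵢ = I (w.l.o.g.), for each k the matrix Σ_{i≠k} Xᵢ X_kᵀ is symmetric. -/
open Matrix

/-- Squared Frobenius norm. -/
noncomputable def frobSq {m n : ℕ} (A : Matrix (Fin m) (Fin n) ℝ) : ℝ :=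
  ∑ i, ∑ j, (A i j) ^ 2

section GPAux


lemma trig (a b : ℝ) (h : ∀ t : ℝ, a * Real.cos t + b * Real.sin t ≤ a) : b = 0 := by
  have ha : 0 ≤ a := by have := h Real.pi; simp at this; linarith
  by_contra hb
  have hpos : 0 < a ^ 2 + b ^ 2 := by positivity
  set r := Real.sqrt (a ^ 2 + b ^ 2) with hrdef
  have hr : 0 < r := Real.sqrt_pos.mpr hpos
  have hr2 : r ^ 2 = a ^ 2 + b ^ 2 := Real.sq_sqrt hpos.le
  have hble : |b / r| ≤ 1 := by
    rw [abs_div, abs_of_pos hr, div_le_one hr]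
    nlinarith [abs_nonneg b, sq_abs b]
  have hble' := abs_le.mp hble
  have hsin : Real.sin (Real.arcsin (b / r)) = b / r :=
    Real.sin_arcsin hble'.1 hble'.2
  have hcos : Real.cos (Real.arcsin (b / r)) = a / r := by
    rw [Real.cos_arcsin]
    have h1 : 1 - (b / r) ^ 2 = (a / r) ^ 2 := by
      field_simp
      nlinarith
    rw [h1, Real.sqrt_sq (by positivity)]
  have h2 := h (Real.arcsin (b / r))
  rw [hsin, hcos] at h2
  have hra : r ≤ a := by
    have h1 : a * (a / r) + b * (b / r) = (a ^ 2 + b ^ 2) / r := by field_simp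
    rw [h1, ← hr2] at h2
    have := (div_le_iff₀ hr).mp h2
    nlinarith
  have hb2 : 0 < b ^ 2 := by positivity
  nlinarith [mul_le_mul_of_nonneg_right hra hr.le, mul_le_mul_of_nonneg_left hra ha]


lemma frobSq_trace {m n : ℕ} (A : Matrix (Fin m) (Fin n) ℝ) :
    frobSq A = (Aᵀ * A).trace := by
  simp only [frobSq, Matrix.trace, Matrix.diag, Matrix.mul_apply, Matrix.transpose_apply, sq]
  rw [Finset.sum_comm]

lemma frobSq_rot {m n : ℕ} (G : Matrix (Fin m) (Fin m) ℝ) (hG : Gᵀ * G = 1)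
    (A : Matrix (Fin m) (Fin n) ℝ) : frobSq (G * A) = frobSq A := by
  rw [frobSq_trace, frobSq_trace, transpose_mul, Matrix.mul_assoc,
    ← Matrix.mul_assoc Gᵀ G A, hG, Matrix.one_mul]

lemma trace_symm {m n : ℕ} (A : Matrix (Fin m) (Fin n) ℝ) (B : Matrix (Fin m) (Fin n) ℝ) :
    (Bᵀ * A).trace = (Aᵀ * B).trace := by
  rw [← Matrix.trace_transpose (Bᵀ * A), transpose_mul, transpose_transpose]

lemma frobSq_add {m n : ℕ} (A B : Matrix (Fin m) (Fin n) ℝ) :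
    frobSq (A + B) = frobSq A + 2 * (Aᵀ * B).trace + frobSq B := by
  rw [frobSq_trace, frobSq_trace, frobSq_trace, transpose_add, Matrix.add_mul,
    Matrix.mul_add, Matrix.mul_add, trace_add, trace_add, trace_add, trace_symm B A]
  ring

lemma cost_eq {nf m n : ℕ} (hnf : nf ≠ 0) (A : Fin nf → Matrix (Fin m) (Fin n) ℝ) :
    ∑ i, frobSq (A i - (nf : ℝ)⁻¹ • ∑ j, A j)
      = ∑ i, frobSq (A i) - (nf : ℝ)⁻¹ * frobSq (∑ j, A j) := by
  set c : ℝ := (nf : ℝ)⁻¹ with hc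
  set S := ∑ j, A j with hS
  have hnfR : (nf : ℝ) ≠ 0 := Nat.cast_ne_zero.mpr hnf
  have expand : ∀ i, frobSq (A i - c • S)
      = frobSq (A i) - 2 * c * ((A i)ᵀ * S).trace + c ^ 2 * frobSq S := by
    intro i
    rw [frobSq_trace, frobSq_trace, frobSq_trace, transpose_sub, transpose_smul,
      Matrix.sub_mul, Matrix.mul_sub, Matrix.mul_sub, Matrix.smul_mul, Matrix.mul_smul,
      Matrix.smul_mul, Matrix.mul_smul]
    simp only [trace_sub, trace_smul, smul_eq_mul]
    rw [trace_symm (A i) S]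
    ring
  rw [Finset.sum_congr rfl fun i _ => expand i]
  have hsum : ∑ i, ((A i)ᵀ * S).trace = frobSq S := by
    rw [frobSq_trace, ← trace_sum]
    congr 1
    rw [← Matrix.sum_mul, ← transpose_sum]
  rw [Finset.sum_add_distrib, Finset.sum_sub_distrib, Finset.sum_const, ← Finset.mul_sum, hsum]
  rw [Finset.card_univ, Fintype.card_fin, nsmul_eq_mul, hc]
  field_simp
  ring


noncomputable def rot01 (t : ℝ) : Matrix (Fin 3) (Fin 3) ℝ :=
  !![Real.cos t, -Real.sin t, 0; Real.sin t, Real.cos t, 0; 0, 0, 1]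
noncomputable def rot02 (t : ℝ) : Matrix (Fin 3) (Fin 3) ℝ :=
  !![Real.cos t, 0, -Real.sin t; 0, 1, 0; Real.sin t, 0, Real.cos t]
noncomputable def rot12 (t : ℝ) : Matrix (Fin 3) (Fin 3) ℝ :=
  !![1, 0, 0; 0, Real.cos t, -Real.sin t; 0, Real.sin t, Real.cos t]

lemma rot01_orth (t : ℝ) : (rot01 t)ᵀ * rot01 t = 1 := by
  have h := Real.sin_sq_add_cos_sq t
  have hT : (rot01 t)ᵀ = !![Real.cos t, Real.sin t, 0; -Real.sin t, Real.cos t, 0; 0, 0, 1] := by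
    ext i j; fin_cases i <;> fin_cases j <;> simp [rot01, Matrix.transpose_apply]
  rw [hT]
  ext i j
  fin_cases i <;> fin_cases j <;>
    simp [rot01, Matrix.mul_apply, Fin.sum_univ_three, Matrix.one_apply, Matrix.vecHead, Matrix.vecTail] <;> nlinarith

lemma rot02_orth (t : ℝ) : (rot02 t)ᵀ * rot02 t = 1 := by
  have h := Real.sin_sq_add_cos_sq t
  have hT : (rot02 t)ᵀ = !![Real.cos t, 0, Real.sin t; 0, 1, 0; -Real.sin t, 0, Real.cos t] := by
    ext i j; fin_cases i <;> fin_cases j <;> simp [rot02, Matrix.transpose_apply]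
  rw [hT]
  ext i j
  fin_cases i <;> fin_cases j <;>
    simp [rot02, Matrix.mul_apply, Fin.sum_univ_three, Matrix.one_apply, Matrix.vecHead, Matrix.vecTail] <;> nlinarith

lemma rot12_orth (t : ℝ) : (rot12 t)ᵀ * rot12 t = 1 := by
  have h := Real.sin_sq_add_cos_sq t
  have hT : (rot12 t)ᵀ = !![1, 0, 0; 0, Real.cos t, Real.sin t; 0, -Real.sin t, Real.cos t] := by
    ext i j; fin_cases i <;> fin_cases j <;> simp [rot12, Matrix.transpose_apply, Matrix.vecHead, Matrix.vecTail]
  rw [hT]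
  ext i j
  fin_cases i <;> fin_cases j <;>
    simp [rot12, Matrix.mul_apply, Fin.sum_univ_three, Matrix.one_apply, Matrix.vecHead, Matrix.vecTail] <;> nlinarith

lemma rot01_det (t : ℝ) : (rot01 t).det = 1 := by
  have h := Real.sin_sq_add_cos_sq t
  simp [rot01, Matrix.det_fin_three]; nlinarith

lemma rot02_det (t : ℝ) : (rot02 t).det = 1 := by
  have h := Real.sin_sq_add_cos_sq t
  simp [rot02, Matrix.det_fin_three]; nlinarith

lemma rot12_det (t : ℝ) : (rot12 t).det = 1 := by
  have h := Real.sin_sq_add_cos_sq t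
  simp [rot12, Matrix.det_fin_three]; nlinarith

lemma trace_rot01 (A : Matrix (Fin 3) (Fin 3) ℝ) (t : ℝ) :
    (Aᵀ * rot01 t).trace = (A 0 0 + A 1 1) * Real.cos t + (A 1 0 - A 0 1) * Real.sin t + A 2 2 := by
  simp [Matrix.trace, Matrix.mul_apply, Fin.sum_univ_three, Matrix.transpose_apply, rot01]; ring

lemma trace_rot02 (A : Matrix (Fin 3) (Fin 3) ℝ) (t : ℝ) :
    (Aᵀ * rot02 t).trace = (A 0 0 + A 2 2) * Real.cos t + (A 2 0 - A 0 2) * Real.sin t + A 1 1 := by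
  simp [Matrix.trace, Matrix.mul_apply, Fin.sum_univ_three, Matrix.transpose_apply, rot02]; ring

lemma trace_rot12 (A : Matrix (Fin 3) (Fin 3) ℝ) (t : ℝ) :
    (Aᵀ * rot12 t).trace = (A 1 1 + A 2 2) * Real.cos t + (A 2 1 - A 1 2) * Real.sin t + A 0 0 := by
  simp [Matrix.trace, Matrix.mul_apply, Fin.sum_univ_three, Matrix.transpose_apply, rot12]; ring


lemma key_sym (A : Matrix (Fin 3) (Fin 3) ℝ)
    (h : ∀ G : Matrix (Fin 3) (Fin 3) ℝ, Gᵀ * G = 1 → G.det = 1 → (Aᵀ * G).trace ≤ A.trace) :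
    Aᵀ = A := by
  have htr : A.trace = A 0 0 + A 1 1 + A 2 2 := by simp [Matrix.trace, Fin.sum_univ_three]
  have h01 : A 1 0 - A 0 1 = 0 := by
    refine trig (A 0 0 + A 1 1) (A 1 0 - A 0 1) fun t => ?_
    have h2 := h (rot01 t) (rot01_orth t) (rot01_det t)
    rw [trace_rot01, htr] at h2; linarith
  have h02 : A 2 0 - A 0 2 = 0 := by
    refine trig (A 0 0 + A 2 2) (A 2 0 - A 0 2) fun t => ?_
    have h2 := h (rot02 t) (rot02_orth t) (rot02_det t)
    rw [trace_rot02, htr] at h2; linarith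
  have h12 : A 2 1 - A 1 2 = 0 := by
    refine trig (A 1 1 + A 2 2) (A 2 1 - A 1 2) fun t => ?_
    have h2 := h (rot12 t) (rot12_orth t) (rot12_det t)
    rw [trace_rot12, htr] at h2; linarith
  ext i j
  fin_cases i <;> fin_cases j <;> simp [Matrix.transpose_apply] <;> linarith

end GPAux

/-- First-order stationarity of generalized Procrustes alignment to the mean:
if the identity rotations minimize the total cost
`Σᵢ ‖Rᵢ Xᵢ − (1/n_f) Σⱼ Rⱼ Xⱼ‖_F²` over tuples of rotations, then for each `k`
the matrix `Σ_{i≠k} Xᵢ Xₖᵀ` is symmetric. -/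
theorem generalized_procrustes_stationarity (nf np : ℕ)
    (X : Fin nf → Matrix (Fin 3) (Fin np) ℝ)
    (hcentered : ∀ i, X i *ᵥ (fun _ => (1 : ℝ)) = 0)
    (hmin : ∀ R : Fin nf → Matrix (Fin 3) (Fin 3) ℝ,
      (∀ i, (R i)ᵀ * R i = 1 ∧ (R i).det = 1) →
      (∑ i, frobSq (X i - (nf : ℝ)⁻¹ • ∑ j, X j)) ≤
      (∑ i, frobSq (R i * X i - (nf : ℝ)⁻¹ • ∑ j, R j * X j))) :
    ∀ k : Fin nf,
      (∑ i ∈ Finset.univ.erase k, X i * (X k)ᵀ)ᵀ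
        = ∑ i ∈ Finset.univ.erase k, X i * (X k)ᵀ := by
  intro k
  have hnf : nf ≠ 0 := (Fin.pos k).ne'
  have hnfR : (0 : ℝ) < (nf : ℝ)⁻¹ := by
    have : (0 : ℝ) < nf := by exact_mod_cast Nat.pos_of_ne_zero hnf
    positivity
  set Y : Matrix (Fin 3) (Fin np) ℝ := ∑ j ∈ Finset.univ.erase k, X j with hY
  have hYX : (∑ i ∈ Finset.univ.erase k, X i * (X k)ᵀ) = Y * (X k)ᵀ := by
    rw [hY, Matrix.sum_mul]
  rw [hYX]
  have hS : ∑ j, X j = Y + X k := by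
    rw [hY, Finset.sum_erase_add _ _ (Finset.mem_univ k)]
  -- key inequality for every rotation G
  have key : ∀ G : Matrix (Fin 3) (Fin 3) ℝ, Gᵀ * G = 1 → G.det = 1 →
      ((Y * (X k)ᵀ)ᵀ * G).trace ≤ (Y * (X k)ᵀ).trace := by
    intro G hG hdet
    set R : Fin nf → Matrix (Fin 3) (Fin 3) ℝ := fun i => if i = k then G else 1 with hR
    have hRk : R k = G := by simp [hR]
    have hRprop : ∀ i, (R i)ᵀ * R i = 1 ∧ (R i).det = 1 := by
      intro i
      by_cases hi : i = k <;> simp [hR, hi, hG, hdet]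
    have hsumR : ∑ j, R j * X j = Y + G * X k := by
      rw [← Finset.sum_erase_add _ _ (Finset.mem_univ k), hRk]
      congr 1
      refine Finset.sum_congr rfl fun j hj => ?_
      rw [hR]
      simp [Finset.mem_erase.mp hj |>.1]
    have hineq := hmin R hRprop
    rw [cost_eq hnf, cost_eq hnf, hsumR, hS] at hineq
    have hfrobR : ∀ i, frobSq (R i * X i) = frobSq (X i) := fun i =>
      frobSq_rot _ (hRprop i).1 _
    rw [Finset.sum_congr rfl fun i _ => hfrobR i] at hineq
    have hc : (nf : ℝ)⁻¹ * frobSq (Y + G * X k) ≤ (nf : ℝ)⁻¹ * frobSq (Y + X k) := by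
      linarith
    have hfs : frobSq (Y + G * X k) ≤ frobSq (Y + X k) :=
      (mul_le_mul_iff_right₀ hnfR).mp hc
    rw [frobSq_add, frobSq_add, frobSq_rot G hG] at hfs
    -- trace (Yᵀ * (G * X k)) ≤ trace (Yᵀ * X k)
    have h2 : (Yᵀ * (G * X k)).trace ≤ (Yᵀ * X k).trace := by linarith
    have e1 : ((Y * (X k)ᵀ)ᵀ * G).trace = (Yᵀ * (G * X k)).trace := by
      rw [transpose_mul, transpose_transpose, ← Matrix.trace_mul_cycle, Matrix.mul_assoc]
    have e2 : (Y * (X k)ᵀ).trace = (Yᵀ * X k).trace := by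
      rw [← Matrix.trace_transpose (Yᵀ * X k), transpose_mul, transpose_transpose,
        Matrix.trace_mul_comm]
    rw [e1, e2]
    exact h2
  exact key_sym _ key
end
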